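/- For each ρ ∈ M°, the series ξ_ρ(λ) = Σ (−1)^{ρ_0−1+l_1+⋯+l_N} (ρ_0−1+l_1+⋯+l_N)!/(l_1!⋯l_N!) ∏_{i=1}^N (λ_i/λ_0)^{l_i} — the sum over (l_0,…,l_N) ∈ (ℤ_{≥0})^{N+1} with l_1â_1+⋯+l_Nâ_N − (l_0+1)â_0 = −ρ (which forces l_0 = ρ_0−1+l_1+⋯+l_N) — has integer coefficients, so ξ_ρ ∈ R with ‖ξ_ρ‖ ≤ 1; hence ξ(λ,x) = Σ_{ρ∈M°} ξ_ρ(λ)(πλ_0)^{−ρ_0}x^{−ρ} belongs to S with ‖ξ(λ,x)‖ ≤ 1. Moreover ξ_{â_0} = Φ, which is an invertible element of R with ‖ξ_{â_0}‖ = 1, so ‖ξ(λ,x)‖ = ‖ξ_{â_0}‖. -/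

import Mathlib

open scoped BigOperators Classical

namespace AHG

/-- `hat v = (1, v) ∈ ℤ^{n+1}`: coordinate `0` equals `1`, the rest is `v`. -/
def hat {n : ℕ} (v : Fin n → ℤ) : Fin (n + 1) → ℤ := Fin.cons 1 v

/-- The coefficients `b_i` of the Dwork series
`θ(t) = exp(π(t - t^p)) = exp(πt)·exp(-πt^p) = Σ b_i t^i`;
explicitly `b_i = Σ_{j + p k = i} π^{j+k} (-1)^k / (j! k!)`. -/
noncomputable def dworkB (p : ℕ) {K : Type*} [Field K] (π : K) (i : ℕ) : K :=
  ∑ k ∈ Finset.range (i + 1),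
    if p * k ≤ i then
      ((-1 : K) ^ k * π ^ (i - p * k + k)) /
        ((Nat.factorial (i - p * k) : K) * (Nat.factorial k : K))
    else 0

/-- The real cone `C` generated by `â_0, …, â_N`. -/
def cone {n N : ℕ} (a : Fin (N + 1) → Fin n → ℤ) : Set (Fin (n + 1) → ℝ) :=
  {x | ∃ t : Fin (N + 1) → ℝ, (∀ j, 0 ≤ t j) ∧
      x = ∑ j, t j • fun i => (hat (a j) i : ℝ)}

/-- `M = C ∩ ℤA`. -/
def latticeM {n N : ℕ} (a : Fin (N + 1) → Fin n → ℤ) : Set (Fin (n + 1) → ℤ) :=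
  {μ | (fun i => (μ i : ℝ)) ∈ cone a ∧
      μ ∈ AddSubgroup.closure (Set.range fun j => hat (a j))}

/-- `M°`: the elements of `M` lying on no proper (exposed) face of `C`, i.e. every linear
functional nonnegative on `C` and vanishing at `μ` vanishes identically on `C`. -/
def latticeMint {n N : ℕ} (a : Fin (N + 1) → Fin n → ℤ) : Set (Fin (n + 1) → ℤ) :=
  {μ | μ ∈ latticeM a ∧
      ∀ ℓ : (Fin (n + 1) → ℝ) →ₗ[ℝ] ℝ, (∀ x ∈ cone a, 0 ≤ ℓ x) →
        ℓ (fun i => (μ i : ℝ)) = 0 → ∀ x ∈ cone a, ℓ x = 0}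

/-- `a 0` is the unique lattice point interior to `Δ = conv(a 1, …, a N)`. -/
def uniqueInteriorPoint {n N : ℕ} (a : Fin (N + 1) → Fin n → ℤ) : Prop :=
  (fun i => (a 0 i : ℝ)) ∈
      interior (convexHull ℝ (Set.range fun j : Fin N => fun i => (a j.succ i : ℝ))) ∧
    ∀ v : Fin n → ℤ,
      (fun i => (v i : ℝ)) ∈
          interior (convexHull ℝ (Set.range fun j : Fin N => fun i => (a j.succ i : ℝ))) →
        v = a 0

/-- The set `L_+`, identified with the tuples `(l_1,…,l_N) ∈ ℤ_{≥0}^N` such that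
`Σ l_i â_i = (Σ l_i) â_0` (then `l_0 = -Σ l_i`). -/
def LplusSet {n N : ℕ} (a : Fin (N + 1) → Fin n → ℤ) : Set (Fin N → ℕ) :=
  {l | ∑ i : Fin N, l i • hat (a i.succ) = (∑ i : Fin N, l i) • hat (a 0)}

/-- The norm (sup of coefficient norms) of an element of `R`, i.e. of a formal power series
in the variables `λ_i/λ_0`, `i = 1, …, N`. -/
noncomputable def Rnorm {N : ℕ} {K : Type*} [NormedField K]
    (f : MvPowerSeries (Fin N) K) : ℝ :=
  ⨆ ν : Fin N →₀ ℕ, ‖f ν‖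

/-- Membership in `R`: bounded coefficients. -/
def memR {N : ℕ} {K : Type*} [NormedField K] (f : MvPowerSeries (Fin N) K) : Prop :=
  BddAbove (Set.range fun ν : Fin N →₀ ℕ => ‖f ν‖)

/-- Norm-convergence (in the sup norm of `R`) of a series of elements of `R` to `g`. -/
def HasSumR {ι : Type*} {N : ℕ} {K : Type*} [NormedField K]
    (f : ι → MvPowerSeries (Fin N) K) (g : MvPowerSeries (Fin N) K) : Prop :=
  Filter.Tendsto (fun s : Finset ι => Rnorm (g - ∑ i ∈ s, f i)) Filter.atTop (nhds 0)

/-- Invertibility in `R`. -/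
def invR {N : ℕ} {K : Type*} [NormedField K] (f : MvPowerSeries (Fin N) K) : Prop :=
  memR f ∧ ∃ g : MvPowerSeries (Fin N) K, memR g ∧ f * g = 1

/-- `B_μ(1, y_1, …, y_N)` as a power series (in fact a polynomial) in `y_i = λ_i/λ_0`:
the coefficient of `y^ν` is `b_{ν_0} b_{ν_1} ⋯ b_{ν_N}` where `ν_0 = μ_0 - Σ ν_i`,
whenever `(ν_0, ν_1, …, ν_N)` is a nonnegative solution of `Σ ν_i â_i = μ`, and `0` otherwise. -/
noncomputable def Bone (p : ℕ) {n N : ℕ} (a : Fin (N + 1) → Fin n → ℤ)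
    {K : Type*} [Field K] (π : K) (μ : Fin (n + 1) → ℤ) : MvPowerSeries (Fin N) K :=
  fun ν =>
    if 0 ≤ μ 0 - ∑ i : Fin N, (ν i : ℤ) ∧
        (μ 0 - ∑ i : Fin N, (ν i : ℤ)) • hat (a 0) +
          ∑ i : Fin N, (ν i : ℤ) • hat (a i.succ) = μ then
      dworkB p π (μ 0 - ∑ i : Fin N, (ν i : ℤ)).toNat * ∏ i : Fin N, dworkB p π (ν i)
    else 0

/-- The substitution `λ_i/λ_0 ↦ λ_i^p/λ_0^p` on `R`, i.e. `ξ(λ) ↦ ξ(λ^p)`. -/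
noncomputable def frobR (p : ℕ) {N : ℕ} {K : Type*} [Field K]
    (f : MvPowerSeries (Fin N) K) : MvPowerSeries (Fin N) K :=
  fun ν => if h : ∃ ν' : Fin N →₀ ℕ, p • ν' = ν then f h.choose else 0

/-- The term indexed by `ν ∈ M°` in the series defining `η_ρ`:
`π^{ρ_0-ν_0} B_{pν-ρ}(1, λ_1/λ_0, …, λ_N/λ_0) ξ_ν(λ^p)` when `pν - ρ ∈ M`, else `0`. -/
noncomputable def etaTerm (p : ℕ) {n N : ℕ} (a : Fin (N + 1) → Fin n → ℤ)
    {K : Type*} [Field K] (π : K)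
    (ξ : {μ : Fin (n + 1) → ℤ // μ ∈ latticeMint a} → MvPowerSeries (Fin N) K)
    (ρ : Fin (n + 1) → ℤ) (ν : {μ : Fin (n + 1) → ℤ // μ ∈ latticeMint a}) :
    MvPowerSeries (Fin N) K :=
  if (p : ℤ) • ν.1 - ρ ∈ latticeM a then
    π ^ (ρ 0 - ν.1 0) • (Bone p a π ((p : ℤ) • ν.1 - ρ) * frobR p (ξ ν))
  else 0


/-- The index type `M°` (as a subtype). -/
abbrev Msub {n N : ℕ} (a : Fin (N + 1) → Fin n → ℤ) : Type _ :=
  {μ : Fin (n + 1) → ℤ // μ ∈ latticeMint a}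

/-- Membership in `S`: a family `(ξ_μ)_{μ ∈ M°}` of elements of `R` with uniformly
bounded coefficients. -/
def memS {n N : ℕ} (a : Fin (N + 1) → Fin n → ℤ) {K : Type*} [NormedField K]
    (ξ : {μ : Fin (n + 1) → ℤ // μ ∈ latticeMint a} → MvPowerSeries (Fin N) K) : Prop :=
  BddAbove (Set.range
    fun q : {μ : Fin (n + 1) → ℤ // μ ∈ latticeMint a} × (Fin N →₀ ℕ) => ‖ξ q.1 q.2‖)

/-- The norm on `S`. -/
noncomputable def Snorm {n N : ℕ} (a : Fin (N + 1) → Fin n → ℤ) {K : Type*} [NormedField K]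
    (ξ : {μ : Fin (n + 1) → ℤ // μ ∈ latticeMint a} → MvPowerSeries (Fin N) K) : ℝ :=
  ⨆ μ : {μ : Fin (n + 1) → ℤ // μ ∈ latticeMint a}, Rnorm (ξ μ)

/-- The truncation `Φ_1` of `Φ`, as a function of `λ = (λ_0, …, λ_N)`. -/
noncomputable def Phi1 (p : ℕ) {n N : ℕ} (a : Fin (N + 1) → Fin n → ℤ)
    {K : Type*} [Field K] (lam : Fin (N + 1) → K) : K :=
  ∑ l ∈ (Fintype.piFinset fun _ : Fin N => Finset.range p).filter
      (fun l => l ∈ LplusSet a ∧ ∑ i : Fin N, l i ≤ p - 1),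
    (-1 : K) ^ (∑ i : Fin N, l i) * (Nat.multinomial Finset.univ l : K) *
      ∏ i : Fin N, (lam i.succ / lam 0) ^ l i

/-- The open polydisk `𝒟`. -/
def Dopen {N : ℕ} {K : Type*} [NormedField K] : Set (Fin (N + 1) → K) :=
  {lam | lam 0 ≠ 0 ∧ ∀ i : Fin N, ‖lam i.succ / lam 0‖ < 1}

/-- The region `𝒟_+`. -/
def Dplus (p : ℕ) {n N : ℕ} (a : Fin (N + 1) → Fin n → ℤ) {K : Type*} [NormedField K] :
    Set (Fin (N + 1) → K) :=
  {lam | lam 0 ≠ 0 ∧ (∀ i : Fin N, ‖lam i.succ / lam 0‖ ≤ 1) ∧ ‖Phi1 p a lam‖ = 1}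

/-- `f` is (on `𝒟_+`) a rational function of `λ_1/λ_0, …, λ_N/λ_0` defined at every
point of `𝒟_+`. -/
def RatOnDplus (p : ℕ) {n N : ℕ} (a : Fin (N + 1) → Fin n → ℤ) {K : Type*} [NormedField K]
    (f : (Fin (N + 1) → K) → K) : Prop :=
  ∃ q r : MvPolynomial (Fin N) K,
    (∀ lam ∈ Dplus p a (K := K), MvPolynomial.eval (fun i => lam i.succ / lam 0) r ≠ 0) ∧
    ∀ lam ∈ Dplus p a (K := K),
      f lam = MvPolynomial.eval (fun i => lam i.succ / lam 0) q /
        MvPolynomial.eval (fun i => lam i.succ / lam 0) r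

/-- `F` is a uniform limit on `𝒟_+` of rational functions in the `λ_i/λ_0` defined
at every point of `𝒟_+`. -/
def UnifLimitRat (p : ℕ) {n N : ℕ} (a : Fin (N + 1) → Fin n → ℤ) {K : Type*} [NormedField K]
    (F : (Fin (N + 1) → K) → K) : Prop :=
  ∃ u : ℕ → (Fin (N + 1) → K) → K, (∀ k, RatOnDplus p a (u k)) ∧
    TendstoUniformlyOn u F Filter.atTop (Dplus p a (K := K))

/-- Membership in `R'`: the power series converges on `𝒟` and its sum extends to an
element of `R'`, i.e. to a uniform limit on `𝒟_+` of rational functions in the `λ_i/λ_0`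
defined at every point of `𝒟_+`. -/
def memR' (p : ℕ) {n N : ℕ} (a : Fin (N + 1) → Fin n → ℤ) {K : Type*} [NormedField K]
    (c : MvPowerSeries (Fin N) K) : Prop :=
  ∃ F : (Fin (N + 1) → K) → K, UnifLimitRat p a F ∧
    ∀ lam ∈ Dopen (N := N) (K := K),
      HasSum (fun ν : Fin N →₀ ℕ => c ν * ∏ i : Fin N, (lam i.succ / lam 0) ^ ν i) (F lam)

/-- Invertibility in `R'`. -/
def invR' (p : ℕ) {n N : ℕ} (a : Fin (N + 1) → Fin n → ℤ) {K : Type*} [NormedField K]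
    (f : MvPowerSeries (Fin N) K) : Prop :=
  memR' p a f ∧ ∃ g : MvPowerSeries (Fin N) K, memR' p a g ∧ f * g = 1

/-- Membership in `S'`. -/
def memS' (p : ℕ) {n N : ℕ} (a : Fin (N + 1) → Fin n → ℤ) {K : Type*} [NormedField K]
    (ξ : {μ : Fin (n + 1) → ℤ // μ ∈ latticeMint a} → MvPowerSeries (Fin N) K) : Prop :=
  memS a ξ ∧ ∀ μ, memR' p a (ξ μ)

/-- Membership in `T`: `ξ ∈ S`, `ξ_{â_0} = 1` and `‖ξ‖ = 1`; the distinguished index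
`μ0 ∈ M°` is the point `â_0`. -/
def memT {n N : ℕ} (a : Fin (N + 1) → Fin n → ℤ) {K : Type*} [NormedField K]
    (μ0 : {μ : Fin (n + 1) → ℤ // μ ∈ latticeMint a})
    (ξ : {μ : Fin (n + 1) → ℤ // μ ∈ latticeMint a} → MvPowerSeries (Fin N) K) : Prop :=
  memS a ξ ∧ ξ μ0 = 1 ∧ Snorm a ξ = 1

/-- `ζ` is a value of the map `β` at `ξ`: `ζ = α*(ξ)/η_{â_0}`, where
`α*(ξ) = (η_ρ)_{ρ ∈ M°}` is given by the norm-convergent series of `etaTerm`s. -/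
def isBeta (p : ℕ) {n N : ℕ} (a : Fin (N + 1) → Fin n → ℤ) {K : Type*} [NormedField K] (π : K)
    (μ0 : {μ : Fin (n + 1) → ℤ // μ ∈ latticeMint a})
    (ξ ζ : {μ : Fin (n + 1) → ℤ // μ ∈ latticeMint a} → MvPowerSeries (Fin N) K) : Prop :=
  ∃ η : {μ : Fin (n + 1) → ℤ // μ ∈ latticeMint a} → MvPowerSeries (Fin N) K,
    (∀ ρ, HasSumR (etaTerm p a π ξ ρ.1) (η ρ)) ∧ ∀ ρ, ζ ρ = η ρ * (η μ0)⁻¹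

/-- The coefficients `ξ_ρ` (Eq. (3.4) of the paper) of
`ξ(λ,x) = γ°(G(λ_0,x) ∏_{i=1}^N exp(πλ_i x^{â_i}))`:
`ξ_ρ = Σ (-1)^{ρ_0-1+Σl_i} (ρ_0-1+Σl_i)!/(l_1!⋯l_N!) ∏ (λ_i/λ_0)^{l_i}`, summed over
`(l_1,…,l_N) ∈ ℤ_{≥0}^N` such that `l_0 := ρ_0-1+Σl_i ≥ 0` and
`Σ l_i â_i - (l_0+1) â_0 = -ρ`. -/
noncomputable def xiRho {n N : ℕ} (a : Fin (N + 1) → Fin n → ℤ) (K : Type*) [Field K]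
    (ρ : Fin (n + 1) → ℤ) : MvPowerSeries (Fin N) K :=
  fun l =>
    if 0 ≤ ρ 0 - 1 + ∑ i : Fin N, (l i : ℤ) ∧
        (∑ i : Fin N, (l i : ℤ) • hat (a i.succ)) -
          (ρ 0 + ∑ i : Fin N, (l i : ℤ)) • hat (a 0) = -ρ then
      (-1 : K) ^ (ρ 0 - 1 + ∑ i : Fin N, (l i : ℤ)) *
        ((ρ 0 - 1 + ∑ i : Fin N, (l i : ℤ)).toNat.factorial : K) /
        ((∏ i : Fin N, (l i).factorial : ℕ) : K)
    else 0

/-- The series `Φ`, as a formal power series in the variables `λ_i/λ_0`. -/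
noncomputable def PhiSeries {n N : ℕ} (a : Fin (N + 1) → Fin n → ℤ) (K : Type*) [Field K] :
    MvPowerSeries (Fin N) K :=
  fun l =>
    if (fun i => l i) ∈ LplusSet a then
      (-1 : K) ^ (∑ i : Fin N, l i) * (Nat.multinomial Finset.univ l : K)
    else 0

/-- The truncation `Φ_1` of `Φ`, as a formal power series in the variables `λ_i/λ_0`. -/
noncomputable def Phi1Series (p : ℕ) {n N : ℕ} (a : Fin (N + 1) → Fin n → ℤ)
    (K : Type*) [Field K] : MvPowerSeries (Fin N) K :=
  fun l =>
    if (fun i => l i) ∈ LplusSet a ∧ ∑ i : Fin N, l i ≤ p - 1 then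
      (-1 : K) ^ (∑ i : Fin N, l i) * (Nat.multinomial Finset.univ l : K)
    else 0

/-- `B_μ(λ_0, …, λ_N)` as a function of `λ` (a finite sum; `finsum` junk value `0`
is irrelevant since the relevant index set is finite). -/
noncomputable def Bfull (p : ℕ) {n N : ℕ} (a : Fin (N + 1) → Fin n → ℤ)
    {K : Type*} [Field K] (π : K) (μ : Fin (n + 1) → ℤ) (lam : Fin (N + 1) → K) : K :=
  finsum fun ν : Fin (N + 1) → ℕ =>
    if ∑ j, ν j • hat (a j) = μ then
      (∏ j, dworkB p π (ν j)) * ∏ j, lam j ^ ν j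
    else 0

end AHG

open scoped BigOperators Classical


namespace AHGAux
open AHG

variable {n N : ℕ}

lemma cone_apply_zero_nonneg (a : Fin (N + 1) → Fin n → ℤ) :
    ∀ x ∈ cone a, 0 ≤ x 0 := by
  rintro x ⟨t, ht, rfl⟩
  have : (∑ j, t j • fun i => (hat (a j) i : ℝ)) 0 = ∑ j, t j := by
    simp [hat]
  rw [this]
  exact Finset.sum_nonneg fun j _ => ht j

lemma hat0_mem_cone (a : Fin (N + 1) → Fin n → ℤ) :
    (fun i => (hat (a 0) i : ℝ)) ∈ cone a := by
  refine ⟨fun j => if j = 0 then 1 else 0, fun j => ?_, ?_⟩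
  · dsimp only; split <;> norm_num
  · symm
    rw [Finset.sum_eq_single 0]
    · simp
    · intro j _ hj; simp [hj]
    · simp

lemma mint_zero_ge_one (a : Fin (N + 1) → Fin n → ℤ) {ρ : Fin (n + 1) → ℤ}
    (hρ : ρ ∈ latticeMint a) : 1 ≤ ρ 0 := by
  obtain ⟨⟨hcone, -⟩, hface⟩ := hρ
  have h0 : (0 : ℝ) ≤ (ρ 0 : ℝ) := cone_apply_zero_nonneg a _ hcone
  have h0' : 0 ≤ ρ 0 := by exact_mod_cast h0
  rcases lt_or_ge (ρ 0) 1 with hlt | hle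
  · exfalso
    have hz : ρ 0 = 0 := by omega
    have := hface (LinearMap.proj 0) (fun x hx => cone_apply_zero_nonneg a x hx)
      (by simp [hz]) _ (hat0_mem_cone a)
    norm_num [hat] at this
  · exact hle

lemma xiRho_coeff_int (a : Fin (N + 1) → Fin n → ℤ) (K : Type*) [Field K] [CharZero K]
    {ρ : Fin (n + 1) → ℤ} (h1 : 1 ≤ ρ 0) (ν : Fin N →₀ ℕ) :
    ∃ z : ℤ, xiRho a K ρ ν = (z : K) := by
  rw [xiRho]
  split_ifs with h
  · obtain ⟨hnn, -⟩ := h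
    have hScast : (∑ i : Fin N, (ν i : ℤ)) = ((∑ i : Fin N, ν i : ℕ) : ℤ) :=
      (Nat.cast_sum _ _).symm
    set S : ℕ := ∑ i : Fin N, ν i with hS
    rw [hScast]
    have hm0 : (0 : ℤ) ≤ ρ 0 - 1 + (S : ℤ) := by omega
    have hSle : S ≤ (ρ 0 - 1 + (S : ℤ)).toNat := by omega
    have hdvd : (∏ i : Fin N, (ν i).factorial) ∣ ((ρ 0 - 1 + (S : ℤ)).toNat).factorial := by
      refine dvd_trans ⟨Nat.multinomial Finset.univ ν, (Nat.multinomial_spec _ _).symm⟩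
        (Nat.factorial_dvd_factorial hSle)
    obtain ⟨c, hc⟩ := hdvd
    refine ⟨(-1) ^ (ρ 0 - 1 + (S : ℤ)).toNat * c, ?_⟩
    have hzpow : (-1 : K) ^ (ρ 0 - 1 + (S : ℤ)) = (-1 : K) ^ ((ρ 0 - 1 + (S : ℤ)).toNat) := by
      conv_lhs => rw [← Int.toNat_of_nonneg hm0]
      exact zpow_natCast _ _
    have hprod_ne : ((∏ i : Fin N, (ν i).factorial : ℕ) : K) ≠ 0 :=
      Nat.cast_ne_zero.mpr (Finset.prod_ne_zero_iff.mpr fun i _ => (Nat.factorial_pos _).ne')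
    rw [hzpow, hc]
    push_cast
    have hP : (∏ i : Fin N, ((ν i).factorial : K)) ≠ 0 :=
      Finset.prod_ne_zero_iff.mpr fun i _ => Nat.cast_ne_zero.mpr (Nat.factorial_pos _).ne'
    rw [mul_div_assoc, mul_div_cancel_left₀ _ hP]
  · exact ⟨0, by simp⟩

lemma memR_and_norm_le_one {N : ℕ} {K : Type*} [NormedField K] [IsUltrametricDist K]
    (f : MvPowerSeries (Fin N) K) (h : ∀ ν, ∃ z : ℤ, f ν = (z : K)) :
    (∀ ν, ‖f ν‖ ≤ 1) ∧ memR f ∧ Rnorm f ≤ 1 := by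
  have hb : ∀ ν, ‖f ν‖ ≤ 1 := fun ν => by
    obtain ⟨z, hz⟩ := h ν
    rw [hz]
    exact IsUltrametricDist.norm_intCast_le_one K z
  exact ⟨hb, ⟨1, by rintro x ⟨ν, rfl⟩; exact hb ν⟩, Real.iSup_le hb zero_le_one⟩

lemma invOfUnit_coeff_norm_le_one {N : ℕ} {K : Type*} [NormedField K] [IsUltrametricDist K]
    (f : MvPowerSeries (Fin N) K) (hb : ∀ ν, ‖f ν‖ ≤ 1) :
    ∀ ν, ‖MvPowerSeries.invOfUnit f 1 ν‖ ≤ 1 := by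
  classical
  suffices H : ∀ d (ν : Fin N →₀ ℕ), (ν.sum fun _ m => m) = d →
      ‖MvPowerSeries.invOfUnit f 1 ν‖ ≤ 1 from fun ν => H _ ν rfl
  intro d
  induction d using Nat.strong_induction_on with
  | _ d ih =>
  intro ν hd
  have hcoeff : MvPowerSeries.invOfUnit f 1 ν
      = MvPowerSeries.coeff ν (MvPowerSeries.invOfUnit f 1) := rfl
  rw [hcoeff, MvPowerSeries.coeff_invOfUnit]
  split_ifs with hν0
  · simp
  · simp only [inv_one, Units.val_one, neg_mul, one_mul, norm_neg]
    refine IsUltrametricDist.norm_sum_le_of_forall_le_of_nonneg zero_le_one ?_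
    rintro ⟨x1, x2⟩ hx
    replace hx : x1 + x2 = ν := by simpa using hx
    dsimp only
    split_ifs with hlt
    · have hx1 : x1 ≠ 0 := by
        rintro rfl
        rw [zero_add] at hx
        exact lt_irrefl _ (hx ▸ hlt)
      have hsplit : (ν.sum fun _ m => m) = (x1.sum fun _ m => m) + (x2.sum fun _ m => m) := by
        rw [← hx]
        exact Finsupp.sum_add_index' (fun _ => rfl) (fun _ _ _ => rfl)
      have hpos : 0 < x1.sum fun _ m => m := by
        rcases Finsupp.ne_iff.mp hx1 with ⟨i, hi⟩
        simp only [Finsupp.coe_zero, Pi.zero_apply] at hi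
        calc 0 < x1 i := Nat.pos_of_ne_zero hi
          _ ≤ ∑ j ∈ x1.support, x1 j :=
            Finset.single_le_sum (fun _ _ => Nat.zero_le _) (Finsupp.mem_support_iff.mpr hi)
          _ = x1.sum fun _ m => m := rfl
      have hx2lt : (x2.sum fun _ m => m) < d := by omega
      have h2 : ‖MvPowerSeries.coeff x2 (MvPowerSeries.invOfUnit f 1)‖ ≤ 1 :=
        ih _ hx2lt x2 rfl
      have h1 : ‖MvPowerSeries.coeff x1 f‖ ≤ 1 := hb x1
      calc ‖MvPowerSeries.coeff x1 f * MvPowerSeries.coeff x2 (MvPowerSeries.invOfUnit f 1)‖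
          = ‖MvPowerSeries.coeff x1 f‖ * ‖MvPowerSeries.coeff x2
              (MvPowerSeries.invOfUnit f 1)‖ := norm_mul _ _
        _ ≤ 1 * 1 := mul_le_mul h1 h2 (norm_nonneg _) zero_le_one
        _ = 1 := one_mul 1
    · simp

lemma PhiSeries_zero (a : Fin (N + 1) → Fin n → ℤ) (K : Type*) [Field K] :
    PhiSeries a K 0 = 1 := by
  rw [PhiSeries]
  have hmem : (fun i => (0 : Fin N →₀ ℕ) i) ∈ LplusSet a := by
    simp only [LplusSet, Set.mem_setOf_eq, Finsupp.coe_zero, Pi.zero_apply, zero_smul,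
      Finset.sum_const_zero, smul_zero, Finset.sum_const, smul_eq_mul, mul_zero]
  rw [if_pos hmem]
  simp [Nat.multinomial]

lemma PhiSeries_coeff_int (a : Fin (N + 1) → Fin n → ℤ) (K : Type*) [Field K]
    (l : Fin N →₀ ℕ) : ∃ z : ℤ, PhiSeries a K l = (z : K) := by
  rw [PhiSeries]
  split_ifs
  · exact ⟨(-1) ^ (∑ i : Fin N, l i) * (Nat.multinomial Finset.univ l : ℤ), by push_cast; ring⟩
  · exact ⟨0, by simp⟩

lemma xiRho_hat_eq (a : Fin (N + 1) → Fin n → ℤ) (K : Type*) [Field K] [CharZero K] :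
    xiRho a K (hat (a 0)) = PhiSeries a K := by
  funext l
  have h00 : hat (a 0) 0 = 1 := rfl
  simp only [xiRho, PhiSeries, h00]
  have hScast : (∑ i : Fin N, (l i : ℤ)) = ((∑ i : Fin N, l i : ℕ) : ℤ) :=
    (Nat.cast_sum _ _).symm
  have key : ((∑ i : Fin N, (l i : ℤ) • hat (a i.succ)) -
      ((1 : ℤ) + ∑ i : Fin N, (l i : ℤ)) • hat (a 0) = -hat (a 0)) ↔
      ((fun i => (l i : ℕ)) ∈ LplusSet a) := by
    rw [sub_eq_iff_eq_add, add_smul, one_smul, neg_add_cancel_left, hScast]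
    simp only [natCast_zsmul]
    rfl
  by_cases hmem : (fun i => (l i : ℕ)) ∈ LplusSet a
  · have hnn : (0 : ℤ) ≤ 1 - 1 + ∑ i : Fin N, (l i : ℤ) := by
      have : (0 : ℤ) ≤ ∑ i : Fin N, (l i : ℤ) :=
        Finset.sum_nonneg fun i _ => Int.natCast_nonneg _
      omega
    rw [if_pos ⟨hnn, key.mpr hmem⟩, if_pos hmem]
    have he : (1 : ℤ) - 1 + ∑ i : Fin N, (l i : ℤ) = ((∑ i : Fin N, l i : ℕ) : ℤ) := by
      rw [hScast]; ring
    rw [he, zpow_natCast, Int.toNat_natCast]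
    have hspec := Nat.multinomial_spec Finset.univ (fun i => (l i : ℕ))
    have hprod_ne : ((∏ i : Fin N, (l i).factorial : ℕ) : K) ≠ 0 :=
      Nat.cast_ne_zero.mpr (Finset.prod_ne_zero_iff.mpr fun i _ => (Nat.factorial_pos _).ne')
    rw [div_eq_iff hprod_ne, mul_assoc]
    congr 1
    rw [← Nat.cast_mul, mul_comm, hspec]
  · rw [if_neg (fun hc => hmem (key.mp hc.2)), if_neg hmem]

end AHGAux


/-- each `ξ_ρ` (`ρ ∈ M°`) has integer coefficients, so `ξ_ρ ∈ R` with
`‖ξ_ρ‖ ≤ 1`; hence `ξ(λ,x) ∈ S` with `‖ξ(λ,x)‖ ≤ 1`; moreover `ξ_{â_0} = Φ`, which is an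
invertible element of `R` of norm `1`, so `‖ξ(λ,x)‖ = ‖ξ_{â_0}‖`. -/
theorem stmt_17 (p : ℕ) [Fact p.Prime] (hp2 : p ≠ 2)
    {K : Type*} [NormedField K] [IsUltrametricDist K] [CompleteSpace K] [IsAlgClosed K]
    (ι : ℚ_[p] →+* K) (hι : ∀ x, ‖ι x‖ = ‖x‖)
    (π : K) (hπ : π ^ (p - 1) = -(p : K))
    (n N : ℕ) (hn : 0 < n) (hN : 0 < N) (a : Fin (N + 1) → Fin n → ℤ) :
    (∀ ρ ∈ AHG.latticeMint a,
      (∀ ν : Fin N →₀ ℕ, ∃ z : ℤ, AHG.xiRho a K ρ ν = (z : K)) ∧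
      AHG.memR (AHG.xiRho a K ρ) ∧ AHG.Rnorm (AHG.xiRho a K ρ) ≤ 1) ∧
    AHG.memS a (fun ρ : AHG.Msub a => AHG.xiRho a K ρ.1) ∧
    AHG.Snorm a (fun ρ : AHG.Msub a => AHG.xiRho a K ρ.1) ≤ 1 ∧
    ∀ μ0 : AHG.Msub a, μ0.1 = AHG.hat (a 0) →
      AHG.xiRho a K μ0.1 = AHG.PhiSeries a K ∧
      AHG.invR (AHG.PhiSeries a K) ∧
      AHG.Rnorm (AHG.PhiSeries a K) = 1 ∧
      AHG.Snorm a (fun ρ : AHG.Msub a => AHG.xiRho a K ρ.1) =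
        AHG.Rnorm (AHG.xiRho a K μ0.1) := by
  haveI : CharZero K := ⟨fun m m' h => by
    have : ι (m : ℚ_[p]) = ι (m' : ℚ_[p]) := by rw [map_natCast, map_natCast, h]
    exact_mod_cast ι.injective this⟩
  have part1 : ∀ ρ ∈ AHG.latticeMint a,
      (∀ ν : Fin N →₀ ℕ, ∃ z : ℤ, AHG.xiRho a K ρ ν = (z : K)) ∧
      AHG.memR (AHG.xiRho a K ρ) ∧ AHG.Rnorm (AHG.xiRho a K ρ) ≤ 1 := by
    intro ρ hρ
    have hz := AHGAux.xiRho_coeff_int a K (AHGAux.mint_zero_ge_one a hρ)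
    obtain ⟨hb, hmem, hle⟩ := AHGAux.memR_and_norm_le_one _ hz
    exact ⟨hz, hmem, hle⟩
  have hbnd : ∀ (ρ : AHG.Msub a) (ν : Fin N →₀ ℕ), ‖AHG.xiRho a K ρ.1 ν‖ ≤ 1 := by
    intro ρ ν
    obtain ⟨z, hz⟩ := (part1 ρ.1 ρ.2).1 ν
    rw [hz]
    exact IsUltrametricDist.norm_intCast_le_one K z
  have hSle1 : AHG.Snorm a (fun ρ : AHG.Msub a => AHG.xiRho a K ρ.1) ≤ 1 :=
    Real.iSup_le (fun μ => (part1 μ.1 μ.2).2.2) zero_le_one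
  refine ⟨part1, ⟨1, ?_⟩, hSle1, ?_⟩
  · rintro x ⟨q, rfl⟩
    exact hbnd q.1 q.2
  · intro μ0 hμ0
    have hxi : AHG.xiRho a K μ0.1 = AHG.PhiSeries a K := by
      rw [hμ0]
      exact AHGAux.xiRho_hat_eq a K
    obtain ⟨hPb, hPmem, hPle⟩ := AHGAux.memR_and_norm_le_one _ (AHGAux.PhiSeries_coeff_int a K)
    have hconst : MvPowerSeries.constantCoeff (AHG.PhiSeries a K) = ((1 : Kˣ) : K) := by
      rw [Units.val_one]
      exact AHGAux.PhiSeries_zero a K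
    have hinvb := AHGAux.invOfUnit_coeff_norm_le_one (AHG.PhiSeries a K) hPb
    have hRnorm1 : AHG.Rnorm (AHG.PhiSeries a K) = 1 := by
      refine le_antisymm hPle ?_
      have := le_ciSup (f := fun ν : Fin N →₀ ℕ => ‖AHG.PhiSeries a K ν‖) hPmem 0
      rwa [AHGAux.PhiSeries_zero, norm_one] at this
    have hRx1 : AHG.Rnorm (AHG.xiRho a K μ0.1) = 1 := by rw [hxi]; exact hRnorm1
    have hbra : BddAbove (Set.range fun μ : AHG.Msub a => AHG.Rnorm (AHG.xiRho a K μ.1)) :=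
      ⟨1, by rintro x ⟨μ, rfl⟩; exact (part1 μ.1 μ.2).2.2⟩
    refine ⟨hxi, ⟨hPmem, MvPowerSeries.invOfUnit (AHG.PhiSeries a K) 1,
      ⟨1, by rintro x ⟨ν, rfl⟩; exact hinvb ν⟩,
      MvPowerSeries.mul_invOfUnit _ _ hconst⟩, hRnorm1, ?_⟩
    exact le_antisymm (hSle1.trans_eq hRx1.symm) (le_ciSup hbra μ0)
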